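/- The expression f''(s) + s·f'''(s) − s·(f''(s))² / f'(s) tends to −(α−β)/(2α) as s → 0 from the right. -/

import Mathlib

open Real Filter Topology

noncomputable def fFJ (α β : ℝ) (s : ℝ) : ℝ :=
  (1 / ((β + 1) * α ^ β)) * ∫ x in (0:ℝ)..s, ((α + Real.log (1 + x)) ^ (β + 1) - α ^ (β + 1)) / x

namespace FJ13

noncomputable def ψ (α s : ℝ) : ℝ := α + Real.log (1 + s)
noncomputable def C0 (α β : ℝ) : ℝ := 1 / ((β + 1) * α ^ β)
noncomputable def φ (α β s : ℝ) : ℝ := C0 α β * ψ α s ^ (β + 1)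
noncomputable def φ1 (α β s : ℝ) : ℝ := C0 α β * ((β + 1) * ψ α s ^ β / (1 + s))
noncomputable def φ2 (α β s : ℝ) : ℝ :=
  C0 α β * ((β + 1) * (β * ψ α s ^ (β - 1) - ψ α s ^ β) / (1 + s) ^ 2)
noncomputable def q (α β s : ℝ) : ℝ := (φ α β s - φ α β 0) / s
noncomputable def Q (α β s : ℝ) : ℝ := if s = 0 then 1 else q α β s
noncomputable def G2 (α β s : ℝ) : ℝ := (φ1 α β s - q α β s) / s
noncomputable def G3 (α β s : ℝ) : ℝ := (φ2 α β s - 2 * G2 α β s) / s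
noncomputable def U (α : ℝ) : Set ℝ := Set.Ioi (Real.exp (-(α/2)) - 1)

variable {α β s : ℝ}

lemma zero_mem_U (hα : 0 < α) : (0:ℝ) ∈ U α := by
  simp only [U, Set.mem_Ioi, sub_lt_iff_lt_add, zero_add]
  exact Real.exp_lt_one_iff.mpr (by linarith)

lemma Ioi_subset_U (hα : 0 < α) : Set.Ioi (0:ℝ) ⊆ U α := by
  apply Set.Ioi_subset_Ioi
  have : Real.exp (-(α/2)) < 1 := Real.exp_lt_one_iff.mpr (by linarith)
  linarith

lemma one_add_pos (hα : 0 < α) (hs : s ∈ U α) : 0 < 1 + s := by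
  have := Real.exp_pos (-(α/2))
  have h := hs
  simp only [U, Set.mem_Ioi, sub_lt_iff_lt_add] at h
  linarith

lemma ψ_pos (hα : 0 < α) (hs : s ∈ U α) : α / 2 < ψ α s := by
  have h1 : 0 < 1 + s := one_add_pos hα hs
  have h := hs
  simp only [U, Set.mem_Ioi, sub_lt_iff_lt_add] at h
  have : -(α/2) < Real.log (1 + s) := (Real.lt_log_iff_exp_lt h1).mpr (by linarith)
  simp only [ψ]; linarith

lemma ψ_ne (hα : 0 < α) (hs : s ∈ U α) : ψ α s ≠ 0 := by
  have := ψ_pos hα hs; exact ne_of_gt (by linarith)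

lemma hasDerivAt_ψ (hα : 0 < α) (hs : s ∈ U α) : HasDerivAt (ψ α) (1 / (1 + s)) s := by
  have h1 : 0 < 1 + s := one_add_pos hα hs
  have h2 : HasDerivAt (fun t : ℝ => Real.log (1 + t)) (1 / (1 + s)) s := by
    simpa using (HasDerivAt.log ((hasDerivAt_id s).const_add 1) h1.ne')
  exact h2.const_add α

lemma hasDerivAt_φ (hα : 0 < α) (hs : s ∈ U α) : HasDerivAt (φ α β) (φ1 α β s) s := by
  have h := (hasDerivAt_ψ hα hs).rpow_const (p := β + 1) (Or.inl (ψ_ne hα hs))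
  have h2 := h.const_mul (C0 α β)
  refine h2.congr_deriv ?_
  have : β + 1 - 1 = β := by ring
  rw [φ1, this]
  ring

lemma hasDerivAt_φ1 (hα : 0 < α) (hs : s ∈ U α) : HasDerivAt (φ1 α β) (φ2 α β s) s := by
  have h1 : 0 < 1 + s := one_add_pos hα hs
  have hψ := hasDerivAt_ψ hα hs
  have hpow := hψ.rpow_const (p := β) (Or.inl (ψ_ne hα hs))
  have hinv : HasDerivAt (fun t : ℝ => (1 + t)⁻¹) (-1 / (1 + s) ^ 2) s := by
    simpa using ((hasDerivAt_id s).const_add 1).fun_inv h1.ne'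
  have hfn : φ1 α β = fun t => (C0 α β * (β + 1)) * (ψ α t ^ β * (1 + t)⁻¹) := by
    funext t; rw [φ1]; ring
  rw [hfn]
  have h := (hpow.mul hinv).const_mul (C0 α β * (β + 1))
  refine h.congr_deriv ?_
  rw [φ2]
  field_simp
  ring

end FJ13

namespace FJ13
variable {α β s : ℝ}

lemma ψ_zero : ψ α 0 = α := by simp [ψ]

lemma φ1_zero (hβ : 0 ≤ β) (hα : 0 < α) : φ1 α β 0 = 1 := by
  have h1 : α ^ β ≠ 0 := (Real.rpow_pos_of_pos hα β).ne'
  rw [φ1, ψ_zero, C0]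
  field_simp
  norm_num

lemma φ2_zero (hβ : 0 ≤ β) (hα : 0 < α) : φ2 α β 0 = (β - α) / α := by
  have h1 : α ^ β ≠ 0 := (Real.rpow_pos_of_pos hα β).ne'
  have h2 : α ^ (β - 1) = α ^ β / α := by
    rw [Real.rpow_sub hα, Real.rpow_one]
  rw [φ2, ψ_zero, C0, h2]
  field_simp
  ring

lemma continuousAt_φ2 (hα : 0 < α) (hs : s ∈ U α) : ContinuousAt (φ2 α β) s := by
  have hψc := (hasDerivAt_ψ hα hs).continuousAt
  have h1 : (1:ℝ) + s ≠ 0 := (one_add_pos hα hs).ne'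
  have hne := ψ_ne hα hs
  exact continuousAt_const.mul
    ((continuousAt_const.mul
      (((hψc.rpow_const (Or.inl hne)).const_mul β).sub (hψc.rpow_const (Or.inl hne)))).div
      ((continuousAt_const.add continuousAt_id).pow 2) (pow_ne_zero 2 h1))

lemma continuousAt_q (hα : 0 < α) (hs : s ∈ U α) (h0 : s ≠ 0) : ContinuousAt (q α β) s :=
  (((hasDerivAt_φ hα hs).continuousAt.sub continuousAt_const).div continuousAt_id h0)

lemma tendsto_q_zero (hβ : 0 ≤ β) (hα : 0 < α) :
    Tendsto (q α β) (𝓝[≠] (0:ℝ)) (𝓝 1) := by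
  have h := hasDerivAt_φ (β := β) hα (zero_mem_U hα)
  rw [φ1_zero hβ hα] at h
  have h2 := hasDerivAt_iff_tendsto_slope.mp h
  refine h2.congr fun x => ?_
  simp [slope_def_field, q, sub_zero]

lemma continuousAt_Q (hβ : 0 ≤ β) (hα : 0 < α) (hs : s ∈ U α) :
    ContinuousAt (Q α β) s := by
  rcases eq_or_ne s 0 with rfl | h0
  · rw [ContinuousAt]
    have hQ0 : Q α β 0 = 1 := by simp [Q]
    rw [hQ0, ← nhdsNE_sup_pure (0:ℝ), tendsto_sup]
    constructor
    · refine (tendsto_q_zero hβ hα).congr' ?_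
      filter_upwards [self_mem_nhdsWithin] with x hx
      exact (if_neg hx).symm
    · simpa [hQ0] using tendsto_pure_nhds (Q α β) 0
  · refine (continuousAt_q (β := β) hα hs h0).congr ?_
    filter_upwards [eventually_ne_nhds h0] with x hx
    exact (if_neg hx).symm

lemma continuousOn_Q (hβ : 0 ≤ β) (hα : 0 < α) : ContinuousOn (Q α β) (U α) :=
  fun x hx => (continuousAt_Q hβ hα hx).continuousWithinAt

lemma fFJ_eq (hβ : 0 ≤ β) (hα : 0 < α) :
    fFJ α β = fun s => ∫ x in (0:ℝ)..s, Q α β x := by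
  funext s
  rw [fFJ, ← intervalIntegral.integral_const_mul]
  refine intervalIntegral.integral_congr_ae ?_
  have h0 : ∀ᵐ (x : ℝ), x ≠ (0:ℝ) := by
    rw [MeasureTheory.ae_iff]
    simpa using Real.volume_singleton
  filter_upwards [h0] with x hx _
  rw [Q, if_neg hx, q, φ, φ, ψ, ψ]
  have h1 : (1:ℝ) + 0 = 1 := by norm_num
  rw [h1, Real.log_one, add_zero, ← mul_sub, mul_div_assoc, C0]

lemma hasDerivAt_fFJ (hβ : 0 ≤ β) (hα : 0 < α) (hs : s ∈ U α) :
    HasDerivAt (fFJ α β) (Q α β s) s := by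
  rw [fFJ_eq hβ hα]
  have hsub : Set.uIcc (0:ℝ) s ⊆ U α :=
    (Set.ordConnected_Ioi).uIcc_subset (zero_mem_U hα) hs
  have hInt : IntervalIntegrable (Q α β) MeasureTheory.volume 0 s :=
    ((continuousOn_Q hβ hα).mono hsub).intervalIntegrable
  exact intervalIntegral.integral_hasDerivAt_right hInt
    ((continuousOn_Q hβ hα).stronglyMeasurableAtFilter isOpen_Ioi s hs)
    (continuousAt_Q hβ hα hs)

end FJ13

namespace FJ13
variable {α β s : ℝ}

lemma hasDerivAt_q' (hα : 0 < α) (hs : 0 < s) : HasDerivAt (q α β) (G2 α β s) s := by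
  have hU : s ∈ U α := Ioi_subset_U hα hs
  have hfn : q α β = fun t => (φ α β t - φ α β 0) * t⁻¹ := by
    funext t; rw [q, div_eq_mul_inv]
  rw [hfn]
  have h := ((hasDerivAt_φ (β := β) hα hU).sub_const (φ α β 0)).mul
    ((hasDerivAt_id s).inv hs.ne')
  refine h.congr_deriv ?_
  rw [G2, q]
  simp only [Pi.inv_apply, id_eq]
  field_simp
  ring

lemma hasDerivAt_G2' (hα : 0 < α) (hs : 0 < s) : HasDerivAt (G2 α β) (G3 α β s) s := by
  have hU : s ∈ U α := Ioi_subset_U hα hs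
  have hfn : G2 α β = fun t => (φ1 α β t - q α β t) * t⁻¹ := by
    funext t; rw [G2, div_eq_mul_inv]
  rw [hfn]
  have h := ((hasDerivAt_φ1 (β := β) hα hU).sub (hasDerivAt_q' (β := β) hα hs)).mul
    ((hasDerivAt_id s).inv hs.ne')
  refine h.congr_deriv ?_
  simp only [G3, G2, q, id_eq, Pi.inv_apply, Pi.sub_apply]
  field_simp
  ring

lemma deriv_fFJ (hβ : 0 ≤ β) (hα : 0 < α) (hs : s ∈ U α) :
    deriv (fFJ α β) s = Q α β s := (hasDerivAt_fFJ hβ hα hs).deriv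

lemma deriv2_fFJ (hβ : 0 ≤ β) (hα : 0 < α) (hs : 0 < s) :
    deriv (deriv (fFJ α β)) s = G2 α β s := by
  have hev : deriv (fFJ α β) =ᶠ[𝓝 s] q α β := by
    filter_upwards [isOpen_Ioi.mem_nhds hs] with t ht
    rw [deriv_fFJ hβ hα (Ioi_subset_U hα ht), Q, if_neg (ne_of_gt ht)]
  rw [hev.deriv_eq, (hasDerivAt_q' hα hs).deriv]

lemma deriv3_fFJ (hβ : 0 ≤ β) (hα : 0 < α) (hs : 0 < s) :
    deriv (deriv (deriv (fFJ α β))) s = G3 α β s := by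
  have hev : deriv (deriv (fFJ α β)) =ᶠ[𝓝 s] G2 α β := by
    filter_upwards [isOpen_Ioi.mem_nhds hs] with t ht
    exact deriv2_fFJ hβ hα ht
  rw [hev.deriv_eq, (hasDerivAt_G2' hα hs).deriv]

lemma tendsto_q (hβ : 0 ≤ β) (hα : 0 < α) : Tendsto (q α β) (𝓝[>] (0:ℝ)) (𝓝 1) :=
  (tendsto_q_zero hβ hα).mono_left
    (nhdsWithin_mono 0 fun x hx => ne_of_gt hx)

lemma tendsto_φ2 (hα : 0 < α) :
    Tendsto (φ2 α β) (𝓝[>] (0:ℝ)) (𝓝 (φ2 α β 0)) :=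
  ((continuousAt_φ2 hα (zero_mem_U hα)).tendsto).mono_left nhdsWithin_le_nhds

lemma tendsto_G2 (hβ : 0 ≤ β) (hα : 0 < α) :
    Tendsto (G2 α β) (𝓝[>] (0:ℝ)) (𝓝 ((β - α) / (2 * α))) := by
  set f : ℝ → ℝ := fun t => t * φ1 α β t - (φ α β t - φ α β 0) with hf
  have hff' : ∀ x ∈ Set.Ioo (0:ℝ) 1, HasDerivAt f (x * φ2 α β x) x := by
    intro x hx
    have hU : x ∈ U α := Ioi_subset_U hα hx.1
    have h := ((hasDerivAt_id x).mul (hasDerivAt_φ1 (β := β) hα hU)).sub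
      ((hasDerivAt_φ (β := β) hα hU).sub_const (φ α β 0))
    refine h.congr_deriv ?_
    simp only [id_eq]
    ring
  have hgg' : ∀ x ∈ Set.Ioo (0:ℝ) 1, HasDerivAt (fun t : ℝ => t ^ 2) ((2:ℝ) * x) x := by
    intro x _
    simpa using hasDerivAt_pow 2 x
  have hg' : ∀ x ∈ Set.Ioo (0:ℝ) 1, (2:ℝ) * x ≠ 0 := fun x hx => by have := hx.1; positivity
  have hfa : Tendsto f (𝓝[>] (0:ℝ)) (𝓝 0) := by
    have hc : ContinuousAt f 0 := by
      have hU := zero_mem_U (α := α) hα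
      exact (continuousAt_id.mul (hasDerivAt_φ1 hα hU).continuousAt).sub
        ((hasDerivAt_φ hα hU).continuousAt.sub continuousAt_const)
    have hf0 : f 0 = 0 := by simp [hf]
    simpa [hf0] using hc.tendsto.mono_left nhdsWithin_le_nhds
  have hga : Tendsto (fun t : ℝ => t ^ 2) (𝓝[>] (0:ℝ)) (𝓝 0) := by
    have := ((continuous_pow 2).tendsto (0:ℝ)).mono_left
      (nhdsWithin_le_nhds (s := Set.Ioi (0:ℝ)))
    simpa using this
  have hdiv : Tendsto (fun x => (x * φ2 α β x) / ((2:ℝ) * x)) (𝓝[>] (0:ℝ))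
      (𝓝 ((β - α) / (2 * α))) := by
    have h2 : Tendsto (fun x => φ2 α β x / 2) (𝓝[>] (0:ℝ)) (𝓝 ((β - α) / α / 2)) := by
      rw [← φ2_zero hβ hα]
      exact (tendsto_φ2 hα).div_const 2
    have heq : (β - α) / α / 2 = (β - α) / (2 * α) := by ring
    rw [heq] at h2
    refine h2.congr' ?_
    filter_upwards [self_mem_nhdsWithin] with x hx
    have hx0 : x ≠ 0 := ne_of_gt hx
    field_simp
  have hmain := HasDerivAt.lhopital_zero_right_on_Ioo one_pos hff' hgg' hg' hfa hga hdiv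
  refine hmain.congr' ?_
  filter_upwards [self_mem_nhdsWithin] with x hx
  have hx0 : (x:ℝ) ≠ 0 := ne_of_gt hx
  rw [G2, q, hf]
  field_simp

end FJ13

theorem stmt_13 (α β : ℝ) (hβ : 0 ≤ β) (hαβ : β < α) :
    Filter.Tendsto
      (fun s => deriv (deriv (fFJ α β)) s + s * deriv (deriv (deriv (fFJ α β))) s
        - s * (deriv (deriv (fFJ α β)) s) ^ 2 / deriv (fFJ α β) s)
      (nhdsWithin 0 (Set.Ioi 0)) (nhds (-(α - β) / (2 * α))) := by
  have hα : 0 < α := lt_of_le_of_lt hβ hαβ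
  have hαne : α ≠ 0 := hα.ne'
  have hmain : Tendsto (fun s => FJ13.φ2 α β s - FJ13.G2 α β s
      - s * (FJ13.G2 α β s) ^ 2 / FJ13.q α β s) (𝓝[>] (0:ℝ)) (𝓝 (-(α - β) / (2 * α))) := by
    have hs : Tendsto (fun s : ℝ => s) (𝓝[>] (0:ℝ)) (𝓝 0) :=
      tendsto_id.mono_left nhdsWithin_le_nhds
    have h := ((FJ13.tendsto_φ2 (β := β) hα).sub (FJ13.tendsto_G2 hβ hα)).sub
      (((hs.mul ((FJ13.tendsto_G2 hβ hα).pow 2)).div (FJ13.tendsto_q hβ hα) one_ne_zero))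
    convert h using 2
    · rfl
    rw [FJ13.φ2_zero hβ hα]
    field_simp
    ring
  refine hmain.congr' ?_
  filter_upwards [self_mem_nhdsWithin] with s hs
  have hs0 : s ≠ 0 := ne_of_gt hs
  rw [FJ13.deriv_fFJ hβ hα (FJ13.Ioi_subset_U hα hs), FJ13.Q, if_neg hs0,
    FJ13.deriv2_fFJ hβ hα hs, FJ13.deriv3_fFJ hβ hα hs, FJ13.G3]
  field_simp
  ring
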